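/- Let k ≥ 4 be an integer, let A be a k-hyperantihole, and let (X_1, …, X_k) be a partition of V(A) into nonempty cliques such that for each i, X_i is complete to V(A) ∖ (X_{i-1} ∪ X_i ∪ X_{i+1}) and anticomplete to X_{i-1} ∪ X_{i+1}. Then for every i ∈ {1, …, k}, the induced subgraph A ∖ X_i is perfect. Furthermore, if k is even, then A itself is perfect. -/

import Mathlib

open SimpleGraph

/-- The closed neighborhood `N_G[v]` of a vertex `v`. -/
def closedNbhd {V : Type} (G : SimpleGraph V) (v : V) : Set V :=
  insert v (G.neighborSet v)

/-- `X` (indexed cyclically by `ZMod k`) is a ring partition of `G`: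
a partition into `k` nonempty sets, each of which can be ordered so that the
closed neighborhoods are nested, with the last one covering `X i` and the first
one being exactly `X (i-1) ∪ X i ∪ X (i+1)`. -/
def IsRingPartition {V : Type} (G : SimpleGraph V) (k : ℕ) (X : ZMod k → Set V) : Prop :=
  (∀ i, (X i).Nonempty) ∧
  (∀ v : V, ∃! i, v ∈ X i) ∧
  ∀ i, ∃ (m : ℕ) (hm : 0 < m) (u : Fin m → V),
    Function.Injective u ∧
    Set.range u = X i ∧
    (∀ j j' : Fin m, j ≤ j' → closedNbhd G (u j') ⊆ closedNbhd G (u j)) ∧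
    X i ⊆ closedNbhd G (u ⟨m - 1, by omega⟩) ∧
    closedNbhd G (u ⟨0, hm⟩) = X (i - 1) ∪ X i ∪ X (i + 1)

/-- `G` is a `k`-ring. -/
def IsRing {V : Type} (G : SimpleGraph V) (k : ℕ) : Prop :=
  ∃ X : ZMod k → Set V, IsRingPartition G k X

/-- `X` is a hyperhole partition of `G`: a partition into `k` nonempty cliques,
each complete to the two neighboring cliques and anticomplete to all remaining
vertices. -/
def IsHyperholePartition {V : Type} (G : SimpleGraph V) (k : ℕ) (X : ZMod k → Set V) : Prop :=
  (∀ i, (X i).Nonempty) ∧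
  (∀ v : V, ∃! i, v ∈ X i) ∧
  (∀ i, G.IsClique (X i)) ∧
  (∀ i, ∀ x ∈ X i, ∀ y ∈ X (i - 1) ∪ X (i + 1), G.Adj x y) ∧
  (∀ i, ∀ x ∈ X i, ∀ y, y ∉ X (i - 1) ∪ X i ∪ X (i + 1) → ¬ G.Adj x y)

/-- `G` is a `k`-hyperhole. -/
def IsHyperhole {V : Type} (G : SimpleGraph V) (k : ℕ) : Prop :=
  ∃ X : ZMod k → Set V, IsHyperholePartition G k X

/-- `X` is a hyperantihole partition of `G`: a partition into `k` nonempty cliques,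
each complete to all vertices outside the two neighboring cliques (and itself),
and anticomplete to the two neighboring cliques. -/
def IsHyperantiholePartition {V : Type} (G : SimpleGraph V) (k : ℕ) (X : ZMod k → Set V) : Prop :=
  (∀ i, (X i).Nonempty) ∧
  (∀ v : V, ∃! i, v ∈ X i) ∧
  (∀ i, G.IsClique (X i)) ∧
  (∀ i, ∀ x ∈ X i, ∀ y, y ∉ X (i - 1) ∪ X i ∪ X (i + 1) → G.Adj x y) ∧
  (∀ i, ∀ x ∈ X i, ∀ y ∈ X (i - 1) ∪ X (i + 1), ¬ G.Adj x y)

/-- `G` is a `k`-hyperantihole. -/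
def IsHyperantihole {V : Type} (G : SimpleGraph V) (k : ℕ) : Prop :=
  ∃ X : ZMod k → Set V, IsHyperantiholePartition G k X

/-- A vertex is simplicial if its neighborhood is a clique. -/
def IsSimplicial {V : Type} (G : SimpleGraph V) (v : V) : Prop :=
  G.IsClique (G.neighborSet v)

/-- A graph is perfect if every induced subgraph has chromatic number equal to
its clique number. -/
def IsPerfect {V : Type} (G : SimpleGraph V) : Prop :=
  ∀ S : Set V, (G.induce S).chromaticNumber = ((G.induce S).cliqueNum : ℕ∞)

/-- The function `f_k`: `⌊kn/(k-1)⌋` if `n ≡ 0, 1 (mod k-1)`, and `⌈kn/(k-1)⌉`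
otherwise. -/
def ringF (k n : ℕ) : ℕ :=
  if n % (k - 1) ≤ 1 then k * n / (k - 1) else (k * n + (k - 2)) / (k - 1)

/-- The function `g_k`: `⌊kn/(k-1)⌋` if `n mod (k-1) ∈ {0, …, (k-3)/2}`, and
`⌈kn/(k-1)⌉` if `n mod (k-1) ∈ {(k-1)/2, …, k-2}`. -/
def ringG (k n : ℕ) : ℕ :=
  if n % (k - 1) ≤ (k - 3) / 2 then k * n / (k - 1) else (k * n + (k - 2)) / (k - 1)

/-- The function `f_T`: `⌊5n/4⌋` if `n ≡ 0, 1 (mod 4)`, and `⌈5n/4⌉` if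
`n ≡ 2, 3 (mod 4)`. -/
def fT (n : ℕ) : ℕ :=
  if n % 4 ≤ 1 then 5 * n / 4 else (5 * n + 3) / 4

/-- `G` contains the complete graph `K_m` as a minor, witnessed by `m` pairwise
disjoint nonempty branch sets, each inducing a connected subgraph, with an edge
between every two of them. -/
def HasCompleteMinor {V : Type} (G : SimpleGraph V) (m : ℕ) : Prop :=
  ∃ S : Fin m → Set V,
    (∀ i, (S i).Nonempty) ∧
    (∀ i j, i ≠ j → Disjoint (S i) (S j)) ∧
    (∀ i, (G.induce (S i)).Connected) ∧
    (∀ i j, i ≠ j → ∃ x ∈ S i, ∃ y ∈ S j, G.Adj x y)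


open Finset in
/-- If all non-adjacent pairs of distinct vertices get different boolean labels
(i.e. the complement of `H` is bipartite), then `χ(H) = ω(H)`. -/
lemma chromaticNumber_eq_cliqueNum_of_bool {W : Type} [Fintype W]
    (H : SimpleGraph W) (c : W → Bool)
    (hc : ∀ u v : W, u ≠ v → ¬ H.Adj u v → c u ≠ c v) :
    H.chromaticNumber = (H.cliqueNum : ℕ∞) := by
  classical
  have hsame : ∀ u v : W, u ≠ v → c u = c v → H.Adj u v := by
    intro u v h1 h2
    by_contra hadj
    exact hc u v h1 hadj h2
  cases isEmpty_or_nonempty W with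
  | inl hW =>
    obtain ⟨s, hs⟩ := H.exists_isNClique_cliqueNum
    have hs0 : s = ∅ := Finset.eq_empty_of_isEmpty s
    rw [H.chromaticNumber_eq_zero_of_isEmpty, ← hs.2, hs0]
    simp
  | inr hW =>
  set A : Finset W := Finset.univ.filter (fun w => c w = true) with hA
  set B : Finset W := Finset.univ.filter (fun w => c w = false) with hBdef
  have memA : ∀ w, w ∈ A ↔ c w = true := by intro w; simp [hA]
  have memB : ∀ w, w ∈ B ↔ c w = false := by intro w; simp [hBdef]
  set nb : W → Finset W :=
    fun a => Finset.univ.filter (fun b => c b = false ∧ ¬ H.Adj a b ∧ a ≠ b) with hnb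
  have memnb : ∀ a b, b ∈ nb a ↔ c b = false ∧ ¬ H.Adj a b ∧ a ≠ b := by
    intro a b; simp [hnb]
  set D : Finset W → ℕ := fun s => s.card - (s.biUnion nb).card with hD
  set d : ℕ := (A.powerset).sup D with hd
  -- Hall setup
  set t : {w // w ∈ A} → Finset (W ⊕ Fin d) :=
    fun a => ((nb a.1).image Sum.inl) ∪ (Finset.univ.image Sum.inr) with ht
  have hall : ∀ s : Finset {w // w ∈ A}, s.card ≤ (s.biUnion t).card := by
    intro s
    rcases s.eq_empty_or_nonempty with rfl | hs
    · simp
    · have hsub : ((s.image Subtype.val).biUnion nb).image Sum.inl ∪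
          (Finset.univ.image (Sum.inr : Fin d → W ⊕ Fin d)) ⊆ s.biUnion t := by
        intro x hx
        rcases Finset.mem_union.mp hx with hx | hx
        · obtain ⟨y, hy, rfl⟩ := Finset.mem_image.mp hx
          obtain ⟨a, ha, hya⟩ := Finset.mem_biUnion.mp hy
          obtain ⟨a', ha', rfl⟩ := Finset.mem_image.mp ha
          exact Finset.mem_biUnion.mpr
            ⟨a', ha', Finset.mem_union_left _ (Finset.mem_image_of_mem _ hya)⟩
        · obtain ⟨j, _, rfl⟩ := Finset.mem_image.mp hx
          obtain ⟨a, ha⟩ := hs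
          exact Finset.mem_biUnion.mpr
            ⟨a, ha, Finset.mem_union_right _ (Finset.mem_image_of_mem _ (Finset.mem_univ j))⟩
      have h1 : (s.image Subtype.val) ∈ A.powerset := by
        rw [Finset.mem_powerset]
        intro x hx
        obtain ⟨a, _, rfl⟩ := Finset.mem_image.mp hx
        exact a.2
      have h2 : D (s.image Subtype.val) ≤ d := Finset.le_sup h1
      have h3 : (s.image Subtype.val).card = s.card :=
        Finset.card_image_of_injective _ Subtype.val_injective
      simp only [hD] at h2
      have hdisj : Disjoint (((s.image Subtype.val).biUnion nb).image Sum.inl)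
          (Finset.univ.image (Sum.inr : Fin d → W ⊕ Fin d)) := by
        rw [Finset.disjoint_left]
        rintro x hx hx'
        obtain ⟨y, _, rfl⟩ := Finset.mem_image.mp hx
        obtain ⟨j, _, hj⟩ := Finset.mem_image.mp hx'
        exact Sum.inl_ne_inr hj.symm
      have hcard := Finset.card_le_card hsub
      rw [Finset.card_union_of_disjoint hdisj,
        Finset.card_image_of_injective _ Sum.inl_injective,
        Finset.card_image_of_injective _ Sum.inr_injective,
        Finset.card_univ, Fintype.card_fin] at hcard
      omega
  obtain ⟨f, finj, hf⟩ := (Finset.all_card_le_biUnion_card_iff_exists_injective t).mp hall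
  have hfB : ∀ (a : {w // w ∈ A}) (b : W), f a = Sum.inl b →
      c b = false ∧ ¬ H.Adj a.1 b ∧ a.1 ≠ b := by
    intro a b hb
    have hmem := hf a
    rw [hb] at hmem
    rcases Finset.mem_union.mp hmem with h | h
    · obtain ⟨y, hy, hyy⟩ := Finset.mem_image.mp h
      cases Sum.inl_injective hyy
      exact (memnb _ _).mp hy
    · obtain ⟨j, _, hj⟩ := Finset.mem_image.mp h
      exact absurd hj (Sum.inr_ne_inl)
  -- the color type
  have hgamne : Nonempty ({w // w ∈ B} ⊕ Fin d) := by
    rcases B.eq_empty_or_nonempty with hB0 | ⟨b, hb⟩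
    · -- then every vertex is in A, so d ≥ 1
      obtain ⟨w⟩ := hW
      have hwA : w ∈ A := by
        rw [memA]
        rcases Bool.eq_false_or_eq_true (c w) with h | h
        · exact h
        · exact absurd ((memB w).mpr h) (by simp [hB0])
      have hnbw : nb w = ∅ := by
        rw [Finset.eq_empty_iff_forall_notMem]
        intro b hb
        have := ((memnb _ _).mp hb).1
        exact absurd ((memB b).mpr this) (by simp [hB0])
      have h1 : ({w} : Finset W) ∈ A.powerset := by
        rw [Finset.mem_powerset]; simpa using hwA
      have h2 : D {w} ≤ d := Finset.le_sup h1
      have h3 : D {w} = 1 := by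
        simp [hD, hnbw]
      exact ⟨Sum.inr ⟨0, by omega⟩⟩
    · exact ⟨Sum.inl ⟨b, hb⟩⟩
  -- the coloring
  set conv : W ⊕ Fin d → ({w // w ∈ B} ⊕ Fin d) := fun x =>
    match x with
    | Sum.inl w => if h : w ∈ B then Sum.inl ⟨w, h⟩ else Classical.arbitrary ({w // w ∈ B} ⊕ Fin d)
    | Sum.inr j => Sum.inr j
  set g : W → W ⊕ Fin d := fun w => if h : w ∈ A then f ⟨w, h⟩ else Sum.inl w with hg
  have hcol : ∀ u v : W, H.Adj u v → conv (g u) ≠ conv (g v) := by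
    intro u v hadj hconv
    have hne : u ≠ v := H.ne_of_adj hadj
    by_cases hu : u ∈ A <;> by_cases hv : v ∈ A
    · -- both in A
      have hgu : g u = f ⟨u, hu⟩ := by simp [hg, hu]
      have hgv : g v = f ⟨v, hv⟩ := by simp [hg, hv]
      rw [hgu, hgv] at hconv
      have : f ⟨u, hu⟩ = f ⟨v, hv⟩ := by
        rcases hfu : f ⟨u, hu⟩ with b | j <;> rcases hfv : f ⟨v, hv⟩ with b' | j'
        · have hb := (hfB _ _ hfu).1
          have hb' := (hfB _ _ hfv).1
          rw [hfu, hfv] at hconv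
          simp only [conv, dif_pos ((memB b).mpr hb), dif_pos ((memB b').mpr hb')] at hconv
          have : b = b' := congrArg Subtype.val (Sum.inl_injective hconv)
          rw [this]
        · rw [hfu, hfv] at hconv
          have hb := (hfB _ _ hfu).1
          simp only [conv, dif_pos ((memB b).mpr hb)] at hconv
          exact absurd hconv (Sum.inl_ne_inr)
        · rw [hfu, hfv] at hconv
          have hb' := (hfB _ _ hfv).1
          simp only [conv, dif_pos ((memB b').mpr hb')] at hconv
          exact absurd hconv (Sum.inr_ne_inl)
        · rw [hfu, hfv] at hconv
          simp only [conv] at hconv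
          rw [Sum.inr_injective hconv]
      have := finj this
      exact hne (congrArg Subtype.val this)
    · -- u ∈ A, v ∈ B
      have hvB : v ∈ B := by
        rw [memB]
        rcases Bool.eq_false_or_eq_true (c v) with h | h
        · exact absurd ((memA v).mpr h) hv
        · exact h
      have hgu : g u = f ⟨u, hu⟩ := by simp [hg, hu]
      have hgv : g v = Sum.inl v := by simp [hg, hv]
      rw [hgu, hgv] at hconv
      rcases hfu : f ⟨u, hu⟩ with b | j
      · have hb := hfB _ _ hfu
        rw [hfu] at hconv
        simp only [conv, dif_pos ((memB b).mpr hb.1), dif_pos hvB] at hconv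
        have : b = v := congrArg Subtype.val (Sum.inl_injective hconv)
        subst this
        exact hb.2.1 hadj
      · rw [hfu] at hconv
        simp only [conv, dif_pos hvB] at hconv
        exact absurd hconv (Sum.inr_ne_inl)
    · -- u ∈ B, v ∈ A : symmetric
      have huB : u ∈ B := by
        rw [memB]
        rcases Bool.eq_false_or_eq_true (c u) with h | h
        · exact absurd ((memA u).mpr h) hu
        · exact h
      have hgu : g u = Sum.inl u := by simp [hg, hu]
      have hgv : g v = f ⟨v, hv⟩ := by simp [hg, hv]
      rw [hgu, hgv] at hconv
      rcases hfv : f ⟨v, hv⟩ with b | j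
      · have hb := hfB _ _ hfv
        rw [hfv] at hconv
        simp only [conv, dif_pos ((memB b).mpr hb.1), dif_pos huB] at hconv
        have : b = u := (congrArg Subtype.val (Sum.inl_injective hconv)).symm
        subst this
        exact hb.2.1 hadj.symm
      · rw [hfv] at hconv
        simp only [conv, dif_pos huB] at hconv
        exact absurd hconv (Sum.inl_ne_inr)
    · -- both in B
      have huB : u ∈ B := by
        rw [memB]
        rcases Bool.eq_false_or_eq_true (c u) with h | h
        · exact absurd ((memA u).mpr h) hu
        · exact h
      have hvB : v ∈ B := by
        rw [memB]
        rcases Bool.eq_false_or_eq_true (c v) with h | h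
        · exact absurd ((memA v).mpr h) hv
        · exact h
      have hgu : g u = Sum.inl u := by simp [hg, hu]
      have hgv : g v = Sum.inl v := by simp [hg, hv]
      rw [hgu, hgv] at hconv
      simp only [conv, dif_pos huB, dif_pos hvB] at hconv
      exact hne (congrArg Subtype.val (Sum.inl_injective hconv))
  have hcolorable : H.Colorable (B.card + d) := by
    have C : H.Coloring ({w // w ∈ B} ⊕ Fin d) := SimpleGraph.Coloring.mk (fun w => conv (g w))
      (fun {u v} h => hcol u v h)
    have := C.colorable
    rwa [Fintype.card_sum, Fintype.card_coe, Fintype.card_fin] at this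
  -- lower bound: a clique of size B.card + d
  have hω : B.card + d ≤ H.cliqueNum := by
    rcases Nat.eq_zero_or_pos d with hd0 | hd0
    · have hBclique : H.IsClique (B : Set W) := by
        intro u hu v hv huv
        rw [Finset.mem_coe, memB] at hu hv
        exact hsame u v huv (hu.trans hv.symm)
      have := @SimpleGraph.IsClique.card_le_cliqueNum W H _ B hBclique
      omega
    · obtain ⟨S₀, hS₀mem, hS₀⟩ := Finset.exists_mem_eq_sup A.powerset ⟨∅, by simp⟩ D
      have hdD : d = D S₀ := hS₀
      set N₀ := S₀.biUnion nb with hN₀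
      have hSA : S₀ ⊆ A := Finset.mem_powerset.mp hS₀mem
      have hN₀B : N₀ ⊆ B := by
        intro b hb
        obtain ⟨a, _, hab⟩ := Finset.mem_biUnion.mp hb
        rw [memB]
        exact ((memnb _ _).mp hab).1
      have hdisjAB : Disjoint S₀ (B \ N₀) := by
        rw [Finset.disjoint_left]
        intro x hx hx'
        have h1 := (memA x).mp (hSA hx)
        have h2 := (memB x).mp (Finset.mem_sdiff.mp hx').1
        rw [h1] at h2
        simp at h2
      have hcliq : H.IsClique ((S₀ ∪ (B \ N₀)) : Finset W) := by
        intro u hu v hv huv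
        rw [Finset.mem_coe, Finset.mem_union] at hu hv
        have hcross : ∀ x y : W, x ∈ S₀ → y ∈ B \ N₀ → x ≠ y → H.Adj x y := by
          intro x y hx hy hxy
          by_contra hadj
          have : y ∈ nb x := (memnb _ _).mpr
            ⟨(memB y).mp (Finset.mem_sdiff.mp hy).1, hadj, hxy⟩
          exact (Finset.mem_sdiff.mp hy).2 (Finset.mem_biUnion.mpr ⟨x, hx, this⟩)
        rcases hu with hu | hu <;> rcases hv with hv | hv
        · exact hsame u v huv
            (((memA u).mp (hSA hu)).trans ((memA v).mp (hSA hv)).symm)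
        · exact hcross u v hu hv huv
        · exact (hcross v u hv hu (Ne.symm huv)).symm
        · exact hsame u v huv
            (((memB u).mp (Finset.mem_sdiff.mp hu).1).trans
             ((memB v).mp (Finset.mem_sdiff.mp hv).1).symm)
      have hcard : (S₀ ∪ (B \ N₀)).card = S₀.card + (B.card - N₀.card) := by
        rw [Finset.card_union_of_disjoint hdisjAB, Finset.card_sdiff_of_subset hN₀B]
      have hDval : D S₀ = S₀.card - N₀.card := by simp [hD, hN₀]
      have hNB : N₀.card ≤ B.card := Finset.card_le_card hN₀B
      have := @SimpleGraph.IsClique.card_le_cliqueNum W H _ (S₀ ∪ (B \ N₀)) hcliq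
      omega
  have hcolω : H.Colorable H.cliqueNum := hcolorable.mono hω
  have hle : H.chromaticNumber ≤ (H.cliqueNum : ℕ∞) := hcolω.chromaticNumber_le
  have hge : (H.cliqueNum : ℕ∞) ≤ H.chromaticNumber := by
    by_contra h
    push_neg at h
    have hcf := SimpleGraph.cliqueFree_of_chromaticNumber_lt h
    obtain ⟨s, hs⟩ := H.exists_isNClique_cliqueNum
    exact hcf s hs
  exact le_antisymm hle hge

/-- A graph whose complement is bipartite is perfect. -/
lemma isPerfect_of_bool {W : Type} [Finite W] (H : SimpleGraph W) (c : W → Bool)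
    (hc : ∀ u v : W, u ≠ v → ¬ H.Adj u v → c u ≠ c v) : IsPerfect H := by
  intro S
  haveI := Fintype.ofFinite S
  apply chromaticNumber_eq_cliqueNum_of_bool _ (fun v => c v.1)
  rintro ⟨u, hu⟩ ⟨v, hv⟩ hne hadj
  exact hc u v (fun h => hne (Subtype.ext h)) (fun h => hadj h)

/-- If `A` is a `k`-hyperantihole (`k ≥ 4`) with hyperantihole partition `X`,
then `A \ X_i` is perfect for every `i`; moreover, if `k` is even then `A` itself
is perfect. -/
theorem hyperantihole_minus_part_perfect {V : Type} [Fintype V]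
    (k : ℕ) (hk : 4 ≤ k) (A : SimpleGraph V)
    (X : ZMod k → Set V) (hX : IsHyperantiholePartition A k X) :
    (∀ i : ZMod k, IsPerfect (A.induce (X i)ᶜ)) ∧ (Even k → IsPerfect A) := by
  classical
  obtain ⟨hne, huniq, hclique, hcomp, hanti⟩ := hX
  haveI : NeZero k := ⟨by omega⟩
  haveI : Fact (1 < k) := ⟨by omega⟩
  let idx : V → ZMod k := fun v => (huniq v).choose
  have hidx : ∀ v, v ∈ X (idx v) := fun v => (huniq v).choose_spec.1
  have hidx' : ∀ v j, v ∈ X j → j = idx v := fun v j h => (huniq v).choose_spec.2 j h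
  have key : ∀ u v : V, u ≠ v → ¬ A.Adj u v → idx u = idx v + 1 ∨ idx v = idx u + 1 := by
    intro u v hne' hadj
    by_cases h1 : idx u = idx v
    · exact absurd (hclique (idx u) (hidx u) (h1 ▸ hidx v) hne') hadj
    · by_cases h2 : idx u = idx v + 1
      · exact Or.inl h2
      · by_cases h3 : idx u = idx v - 1
        · refine Or.inr ?_
          rw [h3]
          rw [sub_add_cancel]
        · exfalso
          apply hadj
          have hu' : u ∉ X (idx v - 1) ∪ X (idx v) ∪ X (idx v + 1) := by
            intro hmem
            rcases hmem with (h | h) | h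
            · exact h3 (hidx' u _ h).symm
            · exact h1 (hidx' u _ h).symm
            · exact h2 (hidx' u _ h).symm
          exact (hcomp (idx v) v (hidx v) u hu').symm
  have hval1 : ∀ x : ZMod k, (x + 1).val = (x.val + 1) % k := by
    intro x
    rw [ZMod.val_add, ZMod.val_one]
  constructor
  · intro i
    apply isPerfect_of_bool _ (fun v => decide ((idx v.1 - i).val % 2 = 1))
    rintro ⟨u, hu⟩ ⟨v, hv⟩ hne' hadj
    have hne'' : u ≠ v := fun h => hne' (Subtype.ext h)
    have hadj' : ¬ A.Adj u v := fun h => hadj h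
    have hu0 : (idx u - i).val ≠ 0 := by
      rw [Ne, ZMod.val_eq_zero, sub_eq_zero]
      intro h
      exact hu (h ▸ hidx u)
    have hv0 : (idx v - i).val ≠ 0 := by
      rw [Ne, ZMod.val_eq_zero, sub_eq_zero]
      intro h
      exact hv (h ▸ hidx v)
    have hlt : ∀ x : ZMod k, x.val < k := fun x => ZMod.val_lt x
    simp only [ne_eq, decide_eq_decide]
    intro hiff
    rcases key u v hne'' hadj' with h | h
    · have hsub : idx u - i = (idx v - i) + 1 := by rw [h]; ring
      have hp : (idx u - i).val = ((idx v - i).val + 1) % k := by rw [hsub, hval1]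
      rcases Nat.lt_or_ge ((idx v - i).val + 1) k with hlt' | hge
      · rw [Nat.mod_eq_of_lt hlt'] at hp
        omega
      · have : (idx v - i).val + 1 = k := by have := hlt (idx v - i); omega
        rw [this, Nat.mod_self] at hp
        omega
    · have hsub : idx v - i = (idx u - i) + 1 := by rw [h]; ring
      have hp : (idx v - i).val = ((idx u - i).val + 1) % k := by rw [hsub, hval1]
      rcases Nat.lt_or_ge ((idx u - i).val + 1) k with hlt' | hge
      · rw [Nat.mod_eq_of_lt hlt'] at hp
        omega
      · have : (idx u - i).val + 1 = k := by have := hlt (idx u - i); omega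
        rw [this, Nat.mod_self] at hp
        omega
  · intro hkeven
    have hk2 : k % 2 = 0 := Nat.even_iff.mp hkeven
    apply isPerfect_of_bool _ (fun v => decide ((idx v).val % 2 = 1))
    intro u v hne' hadj'
    have hlt : ∀ x : ZMod k, x.val < k := fun x => ZMod.val_lt x
    simp only [ne_eq, decide_eq_decide]
    intro hiff
    rcases key u v hne' hadj' with h | h
    · have hp : (idx u).val = ((idx v).val + 1) % k := by rw [h, hval1]
      rcases Nat.lt_or_ge ((idx v).val + 1) k with hlt' | hge
      · rw [Nat.mod_eq_of_lt hlt'] at hp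
        omega
      · have : (idx v).val + 1 = k := by have := hlt (idx v); omega
        rw [this, Nat.mod_self] at hp
        omega
    · have hp : (idx v).val = ((idx u).val + 1) % k := by rw [h, hval1]
      rcases Nat.lt_or_ge ((idx u).val + 1) k with hlt' | hge
      · rw [Nat.mod_eq_of_lt hlt'] at hp
        omega
      · have : (idx u).val + 1 = k := by have := hlt (idx u); omega
        rw [this, Nat.mod_self] at hp
        omega
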